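/- Let M = V_1 ⊕ ... ⊕ V_n be a finite direct sum of virtually simple left R-modules. If N is a nonzero submodule of M, then there is an index j such that V_j embeds into N. -/

import Mathlib

def VirtuallySimple (R : Type*) [Ring R] (M : Type*) [AddCommGroup M] [Module R M] : Prop :=
  Nontrivial M ∧ ∀ N : Submodule R M, N ≠ ⊥ → Nonempty (N ≃ₗ[R] M)

open scoped DirectSum in
/-- If `M` is a finite direct sum of virtually simple submodules and `N ≤ M` is
nonzero, then some `V j` embeds into `N`. -/
theorem stmt10 (R : Type*) [Ring R] (M : Type*) [AddCommGroup M] [Module R M]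
    (n : ℕ) (V : Fin n → Submodule R M) (hind : iSupIndep V) (hsup : iSup V = ⊤)
    (hvs : ∀ i, VirtuallySimple R (V i))
    (N : Submodule R M) (hN : N ≠ ⊥) :
    ∃ j : Fin n, ∃ f : V j →ₗ[R] N, Function.Injective f := by
  classical
  have hint : DirectSum.IsInternal V :=
    DirectSum.isInternal_submodule_of_iSupIndep_of_iSup_eq_top hind hsup
  set e : M ≃ₗ[R] ⨁ i, V i :=
    (LinearEquiv.ofBijective (DirectSum.coeLinearMap V) hint).symm with he
  -- projections
  set π : ∀ j, M →ₗ[R] V j := fun j =>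
    (DirectSum.component R (Fin n) (fun i => V i) j) ∘ₗ (e : M →ₗ[R] ⨁ i, V i) with hπ
  have hπ_apply : ∀ j (x : M), π j x = (e x) j := fun j x => rfl
  -- decomposition of any element as sum of its components
  have hdecomp : ∀ x : M, x = ∑ i : Fin n, ((π i x : M)) := by
    intro x
    have h1 : (∑ i : Fin n, DirectSum.of (fun i => V i) i ((e x) i)) = e x :=
      DirectSum.sum_univ_of (e x)
    have h2 : e.symm (∑ i : Fin n, DirectSum.of (fun i => V i) i ((e x) i)) = x := by
      rw [h1, LinearEquiv.symm_apply_apply]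
    calc x = e.symm (∑ i : Fin n, DirectSum.of (fun i => V i) i ((e x) i)) := h2.symm
      _ = ∑ i : Fin n, ((π i x : M)) := by
          rw [map_sum]
          refine Finset.sum_congr rfl fun i _ => ?_
          show e.symm _ = _
          rw [he, LinearEquiv.symm_symm]
          show DirectSum.coeLinearMap V (DirectSum.of (fun i => V i) i _) = _
          rw [DirectSum.coeLinearMap_of]
          rfl
  -- π i kills V k for k ≠ i
  have hπ_ne : ∀ {i k : Fin n}, i ≠ k → ∀ v ∈ V k, π i v = 0 := by
    intro i k hik v hv
    have := hint.ofBijective_coeLinearMap_of_mem_ne (Ne.symm hik) hv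
    simpa [hπ_apply, he] using this
  -- support
  set supp : M → Finset (Fin n) := fun x => Finset.univ.filter (fun i => π i x ≠ 0) with hsupp
  have hsupp_zero : ∀ x : M, supp x = ∅ → x = 0 := by
    intro x hx
    have : ∀ i, π i x = 0 := by
      intro i
      by_contra h
      have : i ∈ supp x := by simp [hsupp, h]
      simp [hx] at this
    rw [hdecomp x]
    simp [this]
  -- choose x ∈ N nonzero with minimal support
  obtain ⟨x₀, hx₀N, hx₀⟩ := Submodule.exists_mem_ne_zero_of_ne_bot hN
  have hex : ∃ k, ∃ x ∈ N, x ≠ 0 ∧ (supp x).card = k := ⟨_, x₀, hx₀N, hx₀, rfl⟩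
  obtain ⟨x, hxN, hx0, hxcard⟩ := Nat.find_spec hex
  have hmin : ∀ y ∈ N, y ≠ 0 → (supp x).card ≤ (supp y).card := by
    intro y hy hy0
    rw [hxcard]
    exact Nat.find_min' hex ⟨y, hy, hy0, rfl⟩
  -- pick j in supp x
  have hsx : (supp x).Nonempty := by
    rcases Finset.eq_empty_or_nonempty (supp x) with h | h
    · exact absurd (hsupp_zero x h) hx0
    · exact h
  obtain ⟨j, hj⟩ := hsx
  have hπjx : π j x ≠ 0 := by simpa [hsupp] using hj
  -- the submodule N₀
  set W : Submodule R M := ⨆ i ∈ supp x, V i with hW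
  set N₀ : Submodule R M := N ⊓ W with hN₀
  have hxW : x ∈ W := by
    rw [hdecomp x]
    have : ∀ i : Fin n, ((π i x : M)) ∈ W := by
      intro i
      by_cases hi : i ∈ supp x
      · exact Submodule.mem_iSup_of_mem i (Submodule.mem_iSup_of_mem hi (π i x).2)
      · have : π i x = 0 := by
          by_contra h
          exact hi (by simp [hsupp, h])
        simp [this]
    exact Submodule.sum_mem _ fun i _ => this i
  have hxN₀ : x ∈ N₀ := ⟨hxN, hxW⟩
  -- elements of W have support in supp x
  have hWsupp : ∀ y ∈ W, ∀ i ∉ supp x, π i y = 0 := by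
    intro y hy i hi
    have hle : W ≤ LinearMap.ker (π i) := by
      refine iSup_le fun k => iSup_le fun hk => ?_
      intro v hv
      have hik : i ≠ k := fun h => hi (h ▸ hk)
      exact hπ_ne hik v hv
    exact hle hy
  -- π j is injective on N₀
  set p : N₀ →ₗ[R] V j := (π j) ∘ₗ N₀.subtype with hp
  have hpinj : Function.Injective p := by
    rw [← LinearMap.ker_eq_bot, eq_bot_iff]
    rintro ⟨y, hyN, hyW⟩ hy
    have hπjy : π j y = 0 := hy
    simp only [Submodule.mem_bot]
    by_contra hy0
    have hy0' : y ≠ 0 := fun h => hy0 (by simp [h])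
    have hsub : supp y ⊆ (supp x).erase j := by
      intro i hi
      have hix : i ∈ supp x := by
        by_contra h
        have := hWsupp y hyW i h
        simp [hsupp, this] at hi
      have hij : i ≠ j := by
        intro h
        subst h
        simp [hsupp, hπjy] at hi
      exact Finset.mem_erase.mpr ⟨hij, hix⟩
    have hcard : (supp y).card < (supp x).card :=
      lt_of_le_of_lt (Finset.card_le_card hsub)
        (Finset.card_erase_lt_of_mem hj)
    exact absurd (hmin y hyN hy0') (not_le.mpr hcard)
  -- range of p is a nonzero submodule of V j
  set P : Submodule R (V j) := LinearMap.range p with hP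
  have hPne : P ≠ ⊥ := by
    intro h
    apply hπjx
    have : p ⟨x, hxN₀⟩ ∈ P := LinearMap.mem_range_self p _
    rw [h] at this
    simpa [hp] using this
  obtain ⟨g⟩ := (hvs j).2 P hPne
  -- assemble the embedding
  set pe : N₀ ≃ₗ[R] P := LinearEquiv.ofInjective p hpinj with hpe
  have hfinj : Function.Injective ((Submodule.inclusion (inf_le_left : N₀ ≤ N)) ∘ₗ
      (pe.symm.toLinearMap ∘ₗ g.symm.toLinearMap)) := by
    simp only [LinearMap.coe_comp, LinearEquiv.coe_coe]
    exact (Submodule.inclusion_injective _).comp (pe.symm.injective.comp g.symm.injective)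
  exact ⟨j, _, hfinj⟩
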